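/- The map u_α(z) = (z² + α)/(1 + α z²), for α ∈ (−1,1), maps the open upper half of the unit disc biholomorphically onto the open unit disc with a slit: namely, the image of the open upper half-disc is the open unit disc minus the real segment [α, 1). -/

import Mathlib

open Complex


private lemma denom_ne (α : ℝ) (hα : |α| < 1) (t : ℂ) (ht : ‖t‖ < 1) :
    (1 + (α : ℂ) * t) ≠ 0 := by
  intro h
  have h1 : (α : ℂ) * t = -1 := by linear_combination h
  have h2 : ‖(α : ℂ) * t‖ = 1 := by rw [h1]; simp
  have h3 : ‖(α : ℂ) * t‖ < 1 := by
    rw [norm_mul, Complex.norm_real, Real.norm_eq_abs]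
    nlinarith [norm_nonneg t, abs_nonneg α]
  linarith

private lemma denom_ne' (α : ℝ) (hα : |α| < 1) (w : ℂ) (hw : ‖w‖ < 1) :
    (1 - (α : ℂ) * w) ≠ 0 := by
  intro h
  apply denom_ne (-α) (by rwa [abs_neg]) w hw
  push_cast
  linear_combination h

private lemma norm_sq_eq (z : ℂ) : ‖z‖ ^ 2 = z.re ^ 2 + z.im ^ 2 := by
  rw [Complex.sq_norm, Complex.normSq_apply]; ring

private lemma norm_add_lt (α : ℝ) (hα : |α| < 1) (t : ℂ) (ht : ‖t‖ < 1) :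
    ‖t + (α : ℂ)‖ < ‖1 + (α : ℂ) * t‖ := by
  have ht2 : t.re ^ 2 + t.im ^ 2 < 1 := by
    have := norm_sq_eq t
    nlinarith [norm_nonneg t]
  have e1 : ‖t + (α : ℂ)‖ ^ 2 = (t.re + α) ^ 2 + t.im ^ 2 := by
    rw [norm_sq_eq]; simp
  have e2 : ‖1 + (α : ℂ) * t‖ ^ 2 = (1 + α * t.re) ^ 2 + (α * t.im) ^ 2 := by
    rw [norm_sq_eq]; simp
  have key : ‖t + (α : ℂ)‖ ^ 2 < ‖1 + (α : ℂ) * t‖ ^ 2 := by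
    rw [e1, e2]
    nlinarith [mul_pos (by nlinarith [abs_nonneg α, le_abs_self α, neg_abs_le α] : (0:ℝ) < 1 - α ^ 2)
      (by linarith : (0:ℝ) < 1 - (t.re ^ 2 + t.im ^ 2))]
  nlinarith [norm_nonneg (t + (α : ℂ)), norm_nonneg (1 + (α : ℂ) * t)]

private lemma mob_lt (α : ℝ) (hα : |α| < 1) (t : ℂ) (ht : ‖t‖ < 1) :
    ‖(t + (α : ℂ)) / (1 + (α : ℂ) * t)‖ < 1 := by
  rw [norm_div, div_lt_one (norm_pos_iff.mpr (denom_ne α hα t ht))]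
  exact norm_add_lt α hα t ht

private lemma mob_lt' (α : ℝ) (hα : |α| < 1) (w : ℂ) (hw : ‖w‖ < 1) :
    ‖(w - (α : ℂ)) / (1 - (α : ℂ) * w)‖ < 1 := by
  have heq : (w - (α : ℂ)) / (1 - (α : ℂ) * w)
      = (w + ((-α : ℝ) : ℂ)) / (1 + ((-α : ℝ) : ℂ) * w) := by push_cast; ring
  rw [heq]
  exact mob_lt (-α) (by rwa [abs_neg]) w hw

private lemma sq_not_nonneg_real (z : ℂ) (hz : 0 < z.im) :
    ¬((z ^ 2).im = 0 ∧ 0 ≤ (z ^ 2).re) := by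
  rintro ⟨h1, h2⟩
  rw [pow_two, Complex.mul_im] at h1
  rw [pow_two, Complex.mul_re] at h2
  have hre : z.re = 0 := by
    have : z.re * z.im = 0 := by linarith
    rcases mul_eq_zero.mp this with h | h
    · exact h
    · linarith
  nlinarith

private lemma sqrt_sq (t : ℂ) (ht : ¬(t.im = 0 ∧ 0 ≤ t.re)) :
    (I * Complex.exp (Complex.log (-t) / 2)) ^ 2 = t := by
  have ht0 : t ≠ 0 := by rintro rfl; exact ht ⟨rfl, le_refl 0⟩
  have hnt : (-t) ≠ 0 := neg_ne_zero.mpr ht0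
  have he : Complex.exp (Complex.log (-t) / 2) ^ 2 = -t := by
    rw [pow_two, ← Complex.exp_add]
    rw [show Complex.log (-t) / 2 + Complex.log (-t) / 2 = Complex.log (-t) by ring]
    exact Complex.exp_log hnt
  calc (I * Complex.exp (Complex.log (-t) / 2)) ^ 2
      = I ^ 2 * Complex.exp (Complex.log (-t) / 2) ^ 2 := by ring
    _ = t := by rw [Complex.I_sq, he]; ring

private lemma sqrt_im_pos (t : ℂ) (ht : ¬(t.im = 0 ∧ 0 ≤ t.re)) :
    0 < (I * Complex.exp (Complex.log (-t) / 2)).im := by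
  have ht0 : t ≠ 0 := by rintro rfl; exact ht ⟨rfl, le_refl 0⟩
  have hnt : (-t) ≠ 0 := neg_ne_zero.mpr ht0
  have harg_lt : (-t).arg < Real.pi := by
    rcases lt_or_eq_of_le (Complex.arg_le_pi (-t)) with h | h
    · exact h
    · exfalso
      rcases (Complex.arg_eq_pi_iff).mp h with ⟨h1, h2⟩
      simp only [Complex.neg_re, Complex.neg_im, neg_lt_zero, neg_eq_zero] at h1 h2
      exact ht ⟨h2, le_of_lt h1⟩
  have harg_gt : -Real.pi < (-t).arg := Complex.neg_pi_lt_arg (-t)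
  have him : (Complex.log (-t) / 2).im = (-t).arg / 2 := by
    rw [show (Complex.log (-t) / 2).im = (Complex.log (-t)).im / 2 by
      simp [Complex.div_im, Complex.normSq_apply]]
    rw [Complex.log_im]
  have hcos : 0 < Real.cos ((Complex.log (-t) / 2).im) := by
    rw [him]
    apply Real.cos_pos_of_mem_Ioo
    constructor <;> [linarith; linarith]
  have : (I * Complex.exp (Complex.log (-t) / 2)).im
      = (Complex.exp (Complex.log (-t) / 2)).re := by
    simp [Complex.mul_im]
  rw [this, Complex.exp_re]
  exact mul_pos (Real.exp_pos _) hcos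

private lemma one_sub_sq_ne (α : ℝ) (hα : |α| < 1) : ((1:ℂ) - (α:ℂ)^2) ≠ 0 := by
  have h : (1:ℝ) - α^2 ≠ 0 := by nlinarith [abs_nonneg α, le_abs_self α, neg_abs_le α]
  intro h2
  exact h (by exact_mod_cast h2)

private lemma mob_eq (α : ℝ) (hα : |α| < 1) (t : ℂ) (ht : ‖t‖ < 1) :
    ((t + (α:ℂ))/(1 + (α:ℂ)*t) - α) / (1 - (α:ℂ)*((t + (α:ℂ))/(1 + (α:ℂ)*t))) = t := by
  have hd1 := denom_ne α hα t ht
  have hne := one_sub_sq_ne α hα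
  have hc : ((1:ℂ) - (α:ℂ)^2) * ((1:ℂ) - (α:ℂ)^2)⁻¹ = 1 := mul_inv_cancel₀ hne
  have e : (1 - (α:ℂ)*((t + (α:ℂ))/(1 + (α:ℂ)*t))) = (1 - (α:ℂ)^2)/(1 + (α:ℂ)*t) := by
    rw [eq_div_iff hd1, sub_mul, mul_assoc, div_mul_cancel₀ _ hd1]; ring
  have e2 : (t + (α:ℂ))/(1 + (α:ℂ)*t) - α = t * (1 - (α:ℂ)^2)/(1 + (α:ℂ)*t) := by
    rw [eq_div_iff hd1, sub_mul, div_mul_cancel₀ _ hd1]; ring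
  rw [e, e2, div_div_div_cancel_right₀ hd1, mul_div_assoc, div_self hne, mul_one]

private lemma t_not_nonneg (α : ℝ) (hα : α ∈ Set.Ioo (-1:ℝ) 1) (w : ℂ) (hw1 : ‖w‖ < 1)
    (hw2 : ¬(w.im = 0 ∧ α ≤ w.re ∧ w.re < 1)) :
    ¬(((w - (α:ℂ))/(1 - (α:ℂ)*w)).im = 0 ∧ 0 ≤ ((w - (α:ℂ))/(1 - (α:ℂ)*w)).re) := by
  have hα1 : |α| < 1 := abs_lt.mpr ⟨hα.1, hα.2⟩
  have hd2 : (1 - (α:ℂ)*w) ≠ 0 := denom_ne' α hα1 w hw1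
  set t := (w - (α:ℂ))/(1 - (α:ℂ)*w) with htdef
  have ht1 : ‖t‖ < 1 := mob_lt' α hα1 w hw1
  have hd1 : (1 + (α:ℂ)*t) ≠ 0 := denom_ne α hα1 t ht1
  rintro ⟨hti, htr⟩
  have h0 : t * (1 - (α:ℂ)*w) = w - α := by rw [htdef]; exact div_mul_cancel₀ _ hd2
  have hweq : w * (1 + (α:ℂ)*t) = t + α := by linear_combination -h0
  have hwval : w = (t + (α:ℂ))/(1 + (α:ℂ)*t) := by rw [eq_div_iff hd1]; exact hweq
  obtain ⟨s, hs⟩ : ∃ s : ℝ, t = (s:ℂ) := ⟨t.re, by apply Complex.ext <;> simp [hti]⟩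
  have hs0 : 0 ≤ s := by rw [hs] at htr; simpa using htr
  have hs1 : s < 1 := by
    have h : |s| < 1 := by rw [hs] at ht1; simpa using ht1
    linarith [le_abs_self s]
  have hden : 0 < 1 + α * s := by
    nlinarith [mul_nonneg (by linarith [hα.1] : (0:ℝ) ≤ α + 1) hs0]
  have hwr : w = (((s + α)/(1 + α*s) : ℝ) : ℂ) := by rw [hwval, hs]; push_cast; ring
  apply hw2
  refine ⟨by rw [hwr]; exact Complex.ofReal_im _, ?_, ?_⟩
  · rw [hwr, Complex.ofReal_re, le_div_iff₀ hden]
    nlinarith [mul_nonneg hs0 (by nlinarith [abs_nonneg α, le_abs_self α, neg_abs_le α] : (0:ℝ) ≤ 1 - α^2)]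
  · rw [hwr, Complex.ofReal_re, div_lt_one hden]
    nlinarith [mul_pos (by linarith : (0:ℝ) < 1 - s) (by linarith [hα.2] : (0:ℝ) < 1 - α)]

/-- For `α ∈ (−1, 1)`, the map `u_α(z) = (z² + α)/(1 + α z²)`
maps the open upper half of the unit disc biholomorphically onto the slit
disc: the open unit disc minus the real segment `[α, 1)`.  That is, `u_α` is
holomorphic and injective on the open upper half-disc, its image is exactly
the slit disc, and it admits a holomorphic inverse there. -/
theorem u_alpha_biholomorphic_onto_slit_disc (α : ℝ) (hα : α ∈ Set.Ioo (-1 : ℝ) 1) :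
    let u : ℂ → ℂ := fun z => (z ^ 2 + (α : ℂ)) / (1 + (α : ℂ) * z ^ 2)
    let Ω : Set ℂ := {z : ℂ | ‖z‖ < 1 ∧ 0 < z.im}
    let S : Set ℂ :=
      {w : ℂ | ‖w‖ < 1} \ {w : ℂ | w.im = 0 ∧ α ≤ w.re ∧ w.re < 1}
    DifferentiableOn ℂ u Ω ∧
    Set.InjOn u Ω ∧
    u '' Ω = S ∧
    ∃ v : ℂ → ℂ, DifferentiableOn ℂ v S ∧
      (∀ z ∈ Ω, v (u z) = z) ∧ (∀ w ∈ S, u (v w) = w) := by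
  intro u Ω S
  have hα1 : |α| < 1 := abs_lt.mpr ⟨hα.1, hα.2⟩
  have hu_eq : ∀ z : ℂ, u z = (z ^ 2 + (α : ℂ)) / (1 + (α : ℂ) * z ^ 2) := fun z => rfl
  have hΩ : ∀ z : ℂ, z ∈ Ω ↔ ‖z‖ < 1 ∧ 0 < z.im := fun z => Iff.rfl
  have hS : ∀ w : ℂ, w ∈ S ↔ ‖w‖ < 1 ∧ ¬(w.im = 0 ∧ α ≤ w.re ∧ w.re < 1) := fun w => Iff.rfl
  set v : ℂ → ℂ :=
    fun w => I * Complex.exp (Complex.log (-((w - (α:ℂ)) / (1 - (α:ℂ) * w))) / 2) with hvdef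
  -- norm of square
  have hsq : ∀ z : ℂ, ‖z‖ < 1 → ‖z ^ 2‖ < 1 := by
    intro z hz
    rw [norm_pow]
    nlinarith [norm_nonneg z]
  -- differentiability of u
  have hdiff_u : DifferentiableOn ℂ u Ω := by
    intro z hz
    obtain ⟨hz1, _⟩ := (hΩ z).mp hz
    have hd := denom_ne α hα1 _ (hsq z hz1)
    have : DifferentiableAt ℂ (fun z : ℂ => (z ^ 2 + (α:ℂ)) / (1 + (α:ℂ) * z ^ 2)) z :=
      DifferentiableAt.div (by fun_prop) (by fun_prop) hd
    exact this.differentiableWithinAt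
  -- injectivity
  have hinj : Set.InjOn u Ω := by
    rintro z hz w hw h
    obtain ⟨hz1, hz2⟩ := (hΩ z).mp hz
    obtain ⟨hw1, hw2⟩ := (hΩ w).mp hw
    have hd1 := denom_ne α hα1 _ (hsq z hz1)
    have hd2 := denom_ne α hα1 _ (hsq w hw1)
    rw [hu_eq, hu_eq, div_eq_div_iff hd1 hd2] at h
    have h2 : ((1:ℂ) - (α:ℂ)^2) * (z^2 - w^2) = 0 := by linear_combination h
    have h3 : z^2 = w^2 := by
      rcases mul_eq_zero.mp h2 with h' | h'
      · exact absurd h' (one_sub_sq_ne α hα1)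
      · exact sub_eq_zero.mp h'
    have h4 : (z - w) * (z + w) = 0 := by linear_combination h3
    rcases mul_eq_zero.mp h4 with h' | h'
    · exact sub_eq_zero.mp h'
    · exfalso
      have him : (z + w).im = 0 := by rw [h']; rfl
      rw [Complex.add_im] at him
      linarith
  -- forward image
  have hfwd : ∀ z ∈ Ω, u z ∈ S := by
    intro z hz
    obtain ⟨hz1, hz2⟩ := (hΩ z).mp hz
    have ht : ‖z ^ 2‖ < 1 := hsq z hz1
    rw [hS, hu_eq]
    refine ⟨mob_lt α hα1 _ ht, ?_⟩
    rintro ⟨hw1, hw2, hw3⟩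
    apply sq_not_nonneg_real z hz2
    set w : ℂ := (z ^ 2 + (α:ℂ)) / (1 + (α:ℂ) * z ^ 2) with hwdef
    have hwlt : ‖w‖ < 1 := mob_lt α hα1 _ ht
    have hteq : z ^ 2 = (w - (α:ℂ)) / (1 - (α:ℂ) * w) := (mob_eq α hα1 _ ht).symm
    obtain ⟨r, hr⟩ : ∃ r : ℝ, w = (r:ℂ) := ⟨w.re, by apply Complex.ext <;> simp [hw1]⟩
    have hr2 : α ≤ r := by rw [hr] at hw2; simpa using hw2
    have hr3 : r < 1 := by rw [hr] at hw3; simpa using hw3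
    have habs : |r| < 1 := by
      have : ‖w‖ = |r| := by rw [hr]; simp
      linarith [this ▸ hwlt]
    have hden : 0 < 1 - α * r := by
      nlinarith [abs_nonneg α, le_abs_self α, neg_abs_le α, le_abs_self r, neg_abs_le r,
        mul_self_nonneg (α - r), mul_self_nonneg (α + r)]
    have hre : z ^ 2 = (((r - α) / (1 - α * r) : ℝ) : ℂ) := by
      rw [hteq, hr]; push_cast; ring
    constructor
    · rw [hre]; exact Complex.ofReal_im _
    · rw [hre, Complex.ofReal_re]
      apply div_nonneg <;> linarith
  -- backward: v maps S into Ω and is a right inverse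
  have hbwd : ∀ w ∈ S, v w ∈ Ω ∧ u (v w) = w := by
    intro w hw
    obtain ⟨hw1, hw2⟩ := (hS w).mp hw
    have hd2 : (1 - (α:ℂ) * w) ≠ 0 := denom_ne' α hα1 w hw1
    set t : ℂ := (w - (α:ℂ)) / (1 - (α:ℂ) * w) with htdef
    have ht1 : ‖t‖ < 1 := mob_lt' α hα1 w hw1
    have hd1 : (1 + (α:ℂ) * t) ≠ 0 := denom_ne α hα1 t ht1
    have ht2 : ¬(t.im = 0 ∧ 0 ≤ t.re) := t_not_nonneg α hα w hw1 hw2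
    have h0 : t * (1 - (α:ℂ) * w) = w - α := by rw [htdef]; exact div_mul_cancel₀ _ hd2
    have hweq : w * (1 + (α:ℂ) * t) = t + α := by linear_combination -h0
    have hwval : w = (t + (α:ℂ)) / (1 + (α:ℂ) * t) := by rw [eq_div_iff hd1]; exact hweq
    have hz2 : (v w) ^ 2 = t := sqrt_sq t ht2
    have hzim : 0 < (v w).im := sqrt_im_pos t ht2
    have hznorm : ‖v w‖ < 1 := by
      have h : ‖v w‖ ^ 2 = ‖t‖ := by rw [← norm_pow, hz2]
      nlinarith [norm_nonneg (v w)]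
    refine ⟨(hΩ _).mpr ⟨hznorm, hzim⟩, ?_⟩
    rw [hu_eq, hz2]
    exact hwval.symm
  -- differentiability of v
  have hdiff_v : DifferentiableOn ℂ v S := by
    intro w hw
    obtain ⟨hw1, hw2⟩ := (hS w).mp hw
    have hd2 : (1 - (α:ℂ) * w) ≠ 0 := denom_ne' α hα1 w hw1
    have ht2 := t_not_nonneg α hα w hw1 hw2
    have hmem : -((w - (α:ℂ)) / (1 - (α:ℂ) * w)) ∈ Complex.slitPlane := by
      rw [Complex.mem_slitPlane_iff]
      rcases not_and_or.mp ht2 with h | h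
      · right; simpa using h
      · left
        simp only [Complex.neg_re]
        linarith [lt_of_not_ge h]
    have ha : DifferentiableAt ℂ (fun w : ℂ => w - (α:ℂ)) w := by fun_prop
    have hb : DifferentiableAt ℂ (fun w : ℂ => 1 - (α:ℂ) * w) w := by fun_prop
    have h1 : DifferentiableAt ℂ (fun w : ℂ => -((w - (α:ℂ)) / (1 - (α:ℂ) * w))) w :=
      (ha.div hb hd2).neg
    have h2 := (Complex.differentiableAt_log hmem).comp w h1
    have h3 : DifferentiableAt ℂ v w := ((h2.div_const 2).cexp).const_mul I
    exact h3.differentiableWithinAt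
  refine ⟨hdiff_u, hinj, ?_, v, hdiff_v, ?_, fun w hw => (hbwd w hw).2⟩
  · apply Set.Subset.antisymm
    · rintro _ ⟨z, hz, rfl⟩
      exact hfwd z hz
    · intro w hw
      exact ⟨v w, (hbwd w hw).1, (hbwd w hw).2⟩
  · intro z hz
    have h1 := hfwd z hz
    have h2 := hbwd (u z) h1
    exact hinj h2.1 hz h2.2
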